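/- For c ∈ ℝ, ∫₀ʰ ∫₀ᵗ e^{cτ} B_{i,p,h}(τ) dτ dt = [h²(p-i+1)/(p(p+1))] · ₁F₁(i; p+2; ch). -/

import Mathlib

/-- Bernstein polynomial `B_{i,p,h}` on `[0,h]`, with the convention that it
vanishes for indices `i` outside `1 ≤ i ≤ p`. -/
noncomputable def bern (p i : ℕ) (h t : ℝ) : ℝ :=
  if 1 ≤ i ∧ i ≤ p then
    (Nat.choose (p - 1) (i - 1) : ℝ) * (t / h) ^ (i - 1) * ((h - t) / h) ^ (p - i)
  else 0

/-- Rising factorial `x^{(q)} = x (x+1) ⋯ (x+q-1)`. -/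
def rising (x q : ℕ) : ℕ := ∏ k ∈ Finset.range q, (x + k)

/-- Kummer confluent hypergeometric function `₁F₁(a; b; z)` for natural parameters. -/
noncomputable def kummer (a b : ℕ) (z : ℝ) : ℝ :=
  ∑' n : ℕ, (rising a n : ℝ) * z ^ n / ((rising b n : ℝ) * (Nat.factorial n : ℝ))


open intervalIntegral MeasureTheory Nat

lemma beta_nat (h : ℝ) : ∀ (k m : ℕ), ∫ t in (0:ℝ)..h, t ^ m * (h - t) ^ k
    = h ^ (m + k + 1) * (m ! : ℝ) * (k ! : ℝ) / ((m + k + 1)! : ℝ) := by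
  intro k
  induction k with
  | zero =>
    intro m
    simp [integral_pow, Nat.factorial_succ]
    field_simp
  | succ k ih =>
    intro m
    have hu : ∀ x ∈ Set.Ioo (min (0:ℝ) h) (max 0 h), HasDerivAt (fun t : ℝ => (h - t) ^ (k+1))
        (-((k+1 : ℝ) * (h - x) ^ k)) x := by
      intro x _
      have := ((hasDerivAt_pow (k+1) (h - x)).comp x (((hasDerivAt_id x).const_sub h)))
      refine this.congr_deriv ?_
      push_cast
      ring
    have hv : ∀ x ∈ Set.Ioo (min (0:ℝ) h) (max 0 h), HasDerivAt (fun t : ℝ => t ^ (m+1) / (m+1))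
        (x ^ m) x := by
      intro x _
      have := (hasDerivAt_pow (m+1) x).div_const (m+1)
      refine this.congr_deriv ?_
      field_simp
      push_cast
      ring
    have hcu : ContinuousOn (fun t : ℝ => (h - t) ^ (k+1)) (Set.uIcc 0 h) := by fun_prop
    have hcv : ContinuousOn (fun t : ℝ => t ^ (m+1) / (m+1)) (Set.uIcc 0 h) := by fun_prop
    have hu' : IntervalIntegrable (fun x : ℝ => -((k+1 : ℝ) * (h - x) ^ k)) volume 0 h := by
      apply Continuous.intervalIntegrable; fun_prop
    have hv' : IntervalIntegrable (fun x : ℝ => x ^ m) volume 0 h := by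
      apply Continuous.intervalIntegrable; fun_prop
    have parts := intervalIntegral.integral_mul_deriv_eq_deriv_mul_of_hasDerivAt
      hcu hcv hu hv hu' hv'
    have e1 : (∫ t in (0:ℝ)..h, (h - t) ^ (k+1) * t ^ m) = ∫ t in (0:ℝ)..h, t ^ m * (h - t) ^ (k+1) := by
      congr 1; ext t; ring
    rw [e1] at parts
    rw [parts]
    have e2 : (∫ x in (0:ℝ)..h, -((k+1 : ℝ) * (h - x) ^ k) * (x ^ (m+1) / (m+1)))
        = (-((k+1:ℝ)/(m+1))) * ∫ x in (0:ℝ)..h, x ^ (m+1) * (h - x) ^ k := by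
      rw [← intervalIntegral.integral_const_mul]
      congr 1; ext x; ring
    rw [e2, ih (m+1)]
    simp only [sub_self]
    have hfac : ((m + k + 2)! : ℝ) ≠ 0 := by positivity
    have hfac2 : ((m + 1 + k + 1)! : ℝ) = ((m + k + 2)! : ℝ) := by norm_num; ring_nf
    rw [show m + 1 + k + 1 = m + k + 2 by ring]
    rw [show m + (k+1) + 1 = m + k + 2 by ring]
    rw [show (m + k + 2)! = (m+k+2) * (m+k+1)! by rw [show m+k+2 = (m+k+1)+1 by ring, Nat.factorial_succ]]
    rw [Nat.factorial_succ m, Nat.factorial_succ k]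
    have h1 : ((m:ℝ)+1) ≠ 0 := by positivity
    have h2 : ((m+k+1)! : ℝ) ≠ 0 := by positivity
    have h3 : ((m:ℝ)+(k:ℝ)+2) ≠ 0 := by positivity
    push_cast
    field_simp
    ring

lemma exp_series_lemma (a b : ℕ) (c h : ℝ) (hh : 0 < h) :
    (∫ t in (0:ℝ)..h, Real.exp (c*t) * (t^a * (h-t)^b))
    = ∑' n : ℕ, c^n / (n ! : ℝ) * (h ^ (n + a + b + 1) * ((n+a)! : ℝ) * ((b)! : ℝ) / ((n+a+b+1)! : ℝ)) := by
  set F : ℕ → ℝ → ℝ := fun n t => c^n / (n ! : ℝ) * (t^(n+a) * (h-t)^b) with hF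
  have hFcont : ∀ n, Continuous (F n) := by intro n; fun_prop
  have hF_int : ∀ n, Integrable (F n) (volume.restrict (Set.Ioc (0:ℝ) h)) :=
    fun n => (hFcont n).integrableOn_Ioc
  have hnorm : ∀ n, (∫ t in Set.Ioc (0:ℝ) h, ‖F n t‖)
      = |c|^n / (n ! : ℝ) * (h ^ (n + a + b + 1) * ((n+a)! : ℝ) * ((b)! : ℝ) / ((n+a+b+1)! : ℝ)) := by
    intro n
    have : ∀ t ∈ Set.Ioc (0:ℝ) h, ‖F n t‖ = |c|^n / (n ! : ℝ) * (t^(n+a) * (h-t)^b) := by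
      intro t ht
      have h1 : (0:ℝ) ≤ t := le_of_lt ht.1
      have h2 : (0:ℝ) ≤ h - t := by linarith [ht.2]
      rw [hF]
      simp only [Real.norm_eq_abs, abs_mul, abs_div, abs_pow, abs_of_nonneg h1,
        abs_of_nonneg h2, Nat.abs_cast]
    rw [MeasureTheory.setIntegral_congr_fun measurableSet_Ioc this,
      MeasureTheory.integral_const_mul, ← intervalIntegral.integral_of_le hh.le, beta_nat]
  have hsum : Summable (fun n => ∫ t in Set.Ioc (0:ℝ) h, ‖F n t‖) := by
    have hb : Summable (fun n : ℕ => (|c| * h)^n / (n ! : ℝ) * h^(a+b+1)) :=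
      (Real.summable_pow_div_factorial (|c| * h)).mul_right _
    refine Summable.of_nonneg_of_le
      (fun n => MeasureTheory.integral_nonneg (fun t => norm_nonneg _)) (fun n => ?_) hb
    rw [hnorm n]
    have hd : ((n+a)! : ℝ) * ((b)! : ℝ) ≤ ((n+a+b+1)! : ℝ) := by
      have : (n+a)! * (b)! ≤ (n+a+b+1)! := by
        calc (n+a)! * (b)! ≤ (n+a+b)! := Nat.le_of_dvd (Nat.factorial_pos _)
              (Nat.factorial_mul_factorial_dvd_factorial_add _ _)
        _ ≤ (n+a+b+1)! := Nat.factorial_le (by omega)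
      exact_mod_cast this
    have hfpos : (0:ℝ) < ((n+a+b+1)! : ℝ) := by positivity
    have : h ^ (n + a + b + 1) * ((n+a)! : ℝ) * ((b)! : ℝ) / ((n+a+b+1)! : ℝ)
        ≤ h ^ (n + a + b + 1) := by
      rw [div_le_iff₀ hfpos]
      calc h ^ (n + a + b + 1) * ((n+a)! : ℝ) * ((b)! : ℝ)
          = h ^ (n + a + b + 1) * (((n+a)! : ℝ) * ((b)! : ℝ)) := by ring
        _ ≤ h ^ (n + a + b + 1) * ((n+a+b+1)! : ℝ) := by
            apply mul_le_mul_of_nonneg_left hd (by positivity)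
    calc |c|^n / (n ! : ℝ) * (h ^ (n + a + b + 1) * ((n+a)! : ℝ) * ((b)! : ℝ) / ((n+a+b+1)! : ℝ))
        ≤ |c|^n / (n ! : ℝ) * h ^ (n + a + b + 1) := by
          apply mul_le_mul_of_nonneg_left this (by positivity)
      _ = (|c| * h)^n / (n ! : ℝ) * h^(a+b+1) := by
          rw [mul_pow, pow_add, pow_add, pow_add]; ring
  have hts : ∀ t : ℝ, ∑' n, F n t = Real.exp (c*t) * (t^a * (h-t)^b) := by
    intro t
    have hs := (NormedSpace.expSeries_div_hasSum_exp (c*t)).mul_right (t^a * (h-t)^b)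
    rw [← Real.exp_eq_exp_ℝ] at hs
    have : (fun n => (c*t)^n / (n ! : ℝ) * (t^a * (h-t)^b)) = fun n => F n t := by
      funext n
      rw [hF]
      simp only [mul_pow, pow_add]
      ring
    rw [this] at hs
    exact hs.tsum_eq
  have key := MeasureTheory.integral_tsum_of_summable_integral_norm hF_int hsum
  rw [intervalIntegral.integral_of_le hh.le]
  have : (∫ t in Set.Ioc (0:ℝ) h, Real.exp (c*t) * (t^a * (h-t)^b))
      = ∫ t in Set.Ioc (0:ℝ) h, ∑' n, F n t := by
    apply MeasureTheory.setIntegral_congr_fun measurableSet_Ioc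
    intro t _
    exact (hts t).symm
  rw [this, ← key]
  congr 1
  funext n
  rw [hF]
  simp only []
  rw [MeasureTheory.integral_const_mul, ← intervalIntegral.integral_of_le hh.le, beta_nat]

lemma rising_mul_factorial (x n : ℕ) : rising (x+1) n * Nat.factorial x = Nat.factorial (x+n) := by
  induction n with
  | zero => simp [rising]
  | succ n ih =>
    rw [rising, Finset.prod_range_succ, ← rising]
    calc rising (x+1) n * (x+1+n) * Nat.factorial x
        = rising (x+1) n * Nat.factorial x * (x+n+1) := by ring
      _ = Nat.factorial (x+n) * (x+n+1) := by rw [ih]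
      _ = Nat.factorial (x+n+1) := by rw [Nat.factorial_succ]; ring

theorem bern_double_integral_exp (p : ℕ) (hp : 1 ≤ p) (i : ℕ) (hi1 : 1 ≤ i) (hi2 : i ≤ p)
    (c : ℝ) (h : ℝ) (hh : 0 < h) :
    ∫ t in (0 : ℝ)..h, (∫ τ in (0 : ℝ)..t, Real.exp (c * τ) * bern p i h τ) =
      h ^ 2 * ((p : ℝ) - i + 1) / ((p : ℝ) * ((p : ℝ) + 1)) * kummer i (p + 2) (c * h) := by
  obtain ⟨a, rfl⟩ : ∃ a, i = a + 1 := ⟨i-1, by omega⟩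
  obtain ⟨b, rfl⟩ : ∃ b, p = a + 1 + b := ⟨p - (a+1), by omega⟩
  have hhne : h ≠ 0 := ne_of_gt hh
  set K : ℝ := ((a+b).choose a : ℝ) with hK
  set g : ℝ → ℝ := fun t => Real.exp (c*t) * bern (a+1+b) (a+1) h t with hg
  have hbern : ∀ t : ℝ, bern (a+1+b) (a+1) h t = K * (t/h)^a * ((h-t)/h)^b := by
    intro t
    rw [bern, if_pos ⟨hi1, hi2⟩, show a+1+b-1 = a+b from by omega,
      show a+1-1 = a from by omega, show a+1+b-(a+1) = b from by omega]
  have hgeq : ∀ t : ℝ, g t = (K / h^(a+b)) * (Real.exp (c*t) * (t^a * (h-t)^b)) := by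
    intro t
    rw [hg]; simp only [hbern t]
    rw [div_pow, div_pow, pow_add]
    field_simp
  have hgc : Continuous g := by
    have : g = fun t => (K / h^(a+b)) * (Real.exp (c*t) * (t^a * (h-t)^b)) := funext hgeq
    rw [this]; fun_prop
  set F : ℝ → ℝ := fun t => ∫ τ in (0:ℝ)..t, g τ with hFdef
  have hFderiv : ∀ x : ℝ, HasDerivAt F (g x) x := by
    intro x
    exact intervalIntegral.integral_hasDerivAt_right
      (hgc.intervalIntegrable _ _) (hgc.stronglyMeasurableAtFilter _ _) hgc.continuousAt
  have hFcont : Continuous F := by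
    refine continuous_iff_continuousAt.2 fun x => (hFderiv x).continuousAt
  have parts := intervalIntegral.integral_mul_deriv_eq_deriv_mul_of_hasDerivAt
    (u := F) (v := fun x => x) (u' := g) (v' := fun _ => (1:ℝ))
    (a := (0:ℝ)) (b := h)
    (hFcont.continuousOn) (continuous_id.continuousOn)
    (fun x _ => hFderiv x) (fun x _ => hasDerivAt_id x)
    (hgc.intervalIntegrable _ _) (continuous_const.intervalIntegrable _ _)
  simp only [mul_one] at parts
  have hL : (∫ t in (0:ℝ)..h, F t) = ∫ t in (0:ℝ)..h, g t * (h - t) := by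
    have h0 : F 0 = 0 := by rw [hFdef]; simp
    have hFh : F h * h = ∫ t in (0:ℝ)..h, g t * h := by
      rw [intervalIntegral.integral_mul_const]
    have hsub : (∫ t in (0:ℝ)..h, g t * (h - t))
        = (∫ t in (0:ℝ)..h, g t * h) - ∫ t in (0:ℝ)..h, g t * t := by
      rw [← intervalIntegral.integral_sub
        (Continuous.intervalIntegrable (by fun_prop : Continuous fun t : ℝ => g t * h) _ _)
        (Continuous.intervalIntegrable (by fun_prop : Continuous fun t : ℝ => g t * t) _ _)]
      congr 1; funext t; ring
    rw [parts, h0, hFh, hsub]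
    ring
  have hL2 : (∫ t in (0:ℝ)..h, g t * (h - t))
      = (K / h^(a+b)) * ∫ t in (0:ℝ)..h, Real.exp (c*t) * (t^a * (h-t)^(b+1)) := by
    rw [← intervalIntegral.integral_const_mul]
    congr 1; funext t
    rw [hgeq t, pow_succ]
    ring
  calc (∫ t in (0:ℝ)..h, ∫ τ in (0:ℝ)..t, Real.exp (c * τ) * bern (a+1+b) (a+1) h τ)
      = ∫ t in (0:ℝ)..h, F t := rfl
    _ = (K / h^(a+b)) * ∫ t in (0:ℝ)..h, Real.exp (c*t) * (t^a * (h-t)^(b+1)) := by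
        rw [hL, hL2]
    _ = (K / h^(a+b)) * ∑' n : ℕ, c^n / (n ! : ℝ)
          * (h ^ (n + a + (b+1) + 1) * ((n+a)! : ℝ) * (((b+1))! : ℝ) / ((n+a+(b+1)+1)! : ℝ)) := by
        rw [exp_series_lemma a (b+1) c h hh]
    _ = _ := by
        rw [kummer, ← tsum_mul_left, ← tsum_mul_left]
        apply tsum_congr
        intro n
        have f1 : (rising (a+1) n : ℝ) = ((a+n)! : ℝ) / ((a)! : ℝ) := by
          rw [eq_div_iff (by positivity)]
          exact_mod_cast rising_mul_factorial a n
        have e2 : a + 1 + b + 2 = (a+b+2)+1 := by omega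
        have f2 : (rising (a+1+b+2) n : ℝ) = ((a+b+2+n)! : ℝ) / ((a+b+2)! : ℝ) := by
          rw [eq_div_iff (by positivity), e2]
          exact_mod_cast rising_mul_factorial (a+b+2) n
        have f3 : K * ((a)! : ℝ) * ((b)! : ℝ) = ((a+b)! : ℝ) := by
          rw [hK]
          have := Nat.choose_mul_factorial_mul_factorial (Nat.le_add_right a b)
          rw [Nat.add_sub_cancel_left] at this
          exact_mod_cast this
        have f4 : ((n+a+(b+1)+1)! : ℝ) = ((a+b+2+n)! : ℝ) := by
          rw [show n+a+(b+1)+1 = a+b+2+n from by omega]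
        have f5 : (((b+1))! : ℝ) = ((b:ℝ)+1) * ((b)! : ℝ) := by
          rw [Nat.factorial_succ]; push_cast; ring
        have f6 : ((a+b+2)! : ℝ) = ((a:ℝ)+(b:ℝ)+2) * (((a:ℝ)+(b:ℝ)+1)) * ((a+b)! : ℝ) := by
          rw [show a+b+2 = (a+b+1)+1 by omega, Nat.factorial_succ, Nat.factorial_succ]
          push_cast; ring
        have hp2 : n + a + (b+1) + 1 = n + (a+b+2) := by omega
        have hpow : h ^ (n + a + (b+1) + 1) = h^n * h^2 * h^(a+b) := by
          rw [hp2, pow_add, pow_add, pow_add]; ring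
        rw [f1, f2, f4, f5, f6, hpow, mul_pow]
        have hfa : ((a)! : ℝ) ≠ 0 := by positivity
        have hfb : ((b)! : ℝ) ≠ 0 := by positivity
        have hfab : ((a+b)! : ℝ) ≠ 0 := by positivity
        have hfabn : ((a+b+2+n)! : ℝ) ≠ 0 := by positivity
        have hfn : ((n)! : ℝ) ≠ 0 := by positivity
        have hab1 : ((a:ℝ)+(b:ℝ)+1) ≠ 0 := by positivity
        have hab2 : ((a:ℝ)+(b:ℝ)+2) ≠ 0 := by positivity
        have hApos : (0:ℝ) < (a:ℝ)+1+(b:ℝ) := by positivity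
        have hcast : ((a+1+b : ℕ) : ℝ) = (a:ℝ)+1+(b:ℝ) := by push_cast; ring
        have hcasti : ((a+1 : ℕ) : ℝ) = (a:ℝ)+1 := by push_cast; ring
        rw [hcast, hcasti]
        rw [← f3]
        have hKne : K ≠ 0 := by
          rw [hK]
          exact_mod_cast Nat.cast_ne_zero.mpr (Nat.choose_pos (Nat.le_add_right a b)).ne'
        field_simp
        ring
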